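/- Define E^k(x,y) = dim Ext^k(M(x·λ₀), M(y·λ₀)) for parabolic Verma modules in the principal block of the parabolic category O for the Hermitian symmetric pair (sl_{N+1}, (gl_N ⊕ gl_1) ∩ sl_{N+1}), indexing weights by (j) = λ₀·s_1⋯s_j for 0 ≤ j ≤ N. Then: E^k((j),(j)) = 1 if k = 0 and 0 otherwise; E^k((j),(j−1)) = 1 if k ∈ {0,1} and 0 otherwise; and for l < j−1, E^k((j),(l)) = 1 if k ∈ {j−l−1, j−l} and 0 otherwise. -/
import Mathlib


/-- Shelton's dimension formulas for the pair
`(sl_{N+1}, (gl_N ⊕ gl_1) ∩ sl_{N+1})`.  Write `E k j l` for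
`dim Ext^k(M((j)·λ₀), M((l)·λ₀))` with `(j) = λ₀·s_1⋯s_j`.  The hypotheses are Shelton's
recursion formulas specialized to this chain:  `E^k(x,x) = δ_{k,0}`, `E^k(x,y) = 0` unless
`y < x` along the chain, `E^k((j),(j-1)) = E^{k-1}((j-1),(j-1)) + E^k((j-1),(j-1))` and,
for `l < j-1`, `E^k((j),(l)) = E^{k-1}((j-1),(l))`.  Then `E^k((j),(j)) = δ_{k,0}`,
`E^k((j),(j-1)) = 1` iff `k ∈ {0,1}` and `0` otherwise, and for `l < j-1`,
`E^k((j),(l)) = 1` iff `k ∈ {j-l-1, j-l}` and `0` otherwise. -/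
theorem stmt9 (E : ℤ → ℕ → ℕ → ℕ)
    (hneg : ∀ kk : ℤ, kk < 0 → ∀ j l, E kk j l = 0)
    (hdiag : ∀ (kk : ℤ) (j : ℕ), E kk j j = if kk = 0 then 1 else 0)
    (hvanish : ∀ (kk : ℤ) (j l : ℕ), j < l → E kk j l = 0)
    (hrec1 : ∀ (kk : ℤ) (j : ℕ), 1 ≤ j →
      E kk j (j - 1) = E (kk - 1) (j - 1) (j - 1) + E kk (j - 1) (j - 1))
    (hrec2 : ∀ (kk : ℤ) (j l : ℕ), l + 1 < j → E kk j l = E (kk - 1) (j - 1) l) :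
    (∀ (kk : ℤ) (j : ℕ), E kk j j = if kk = 0 then 1 else 0) ∧
    (∀ (kk : ℤ) (j : ℕ), 1 ≤ j → E kk j (j - 1) = if kk = 0 ∨ kk = 1 then 1 else 0) ∧
    (∀ (kk : ℤ) (j l : ℕ), l + 1 < j →
      E kk j l = if kk = (j : ℤ) - (l : ℤ) - 1 ∨ kk = (j : ℤ) - (l : ℤ) then 1 else 0) := by
  have h2 : ∀ (kk : ℤ) (j : ℕ), 1 ≤ j →
      E kk j (j - 1) = if kk = 0 ∨ kk = 1 then 1 else 0 := by
    intro kk j hj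
    rw [hrec1 kk j hj, hdiag, hdiag]
    rcases eq_or_ne kk 0 with h | h
    · simp [h]
    rcases eq_or_ne kk 1 with h1 | h1
    · simp [h1]
    · have : kk - 1 ≠ 0 := by omega
      simp [h, h1, this]
  refine ⟨hdiag, h2, ?_⟩
  intro kk j l hjl
  induction j generalizing kk with
  | zero => omega
  | succ n ih =>
    rw [hrec2 kk (n + 1) l hjl]
    simp only [Nat.add_sub_cancel]
    rcases eq_or_lt_of_le (show l + 1 ≤ n by omega) with h | h
    · have hn : n = l + 1 := by omega
      subst hn
      have h' := h2 (kk - 1) (l + 1) (by omega)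
      simp only [Nat.add_sub_cancel] at h'
      rw [h']
      push_cast
      split_ifs <;> omega
    · rw [ih (kk - 1) h]
      push_cast
      split_ifs <;> omega
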